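/- Let n be a positive integer, a : ℤⁿ → ℂ finitely supported with a(−h) = conjugate(a(h)) for all h and with a(h) ≠ 0 for at least one h ≠ 0, and let A be a bounded linear operator on ℓ²(ℤⁿ) with action (A u)(g) = Σ_h a(h)·u(g+h). Let λ be a real number not in the spectrum of A, and let u ∈ ℓ²(ℤⁿ) satisfy (A − λI)u = δ (the Kronecker delta at 0). Then the support {g ∈ ℤⁿ : u(g) ≠ 0} of u is infinite. -/

import Mathlib

/-- Section 2.2 of the paper: the solution of the resolvent equation (A − λI)u = δ at
a delta forcing, with λ outside the spectrum, has infinite (unbounded) support. -/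
theorem resolvent_delta_unbounded_support
    (n : ℕ) (hn : 0 < n)
    (a : (Fin n → ℤ) → ℂ)
    (ha : (Function.support a).Finite)
    (hsymm : ∀ h : Fin n → ℤ, a (-h) = star (a h))
    (hnontriv : ∃ h : Fin n → ℤ, h ≠ 0 ∧ a h ≠ 0)
    (A : lp (fun _ : Fin n → ℤ => ℂ) 2 →L[ℂ] lp (fun _ : Fin n → ℤ => ℂ) 2)
    (hA : ∀ (u : lp (fun _ : Fin n → ℤ => ℂ) 2) (g : Fin n → ℤ),
      (A u) g = ∑ᶠ h : Fin n → ℤ, a h * u (g + h))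
    (lam : ℝ) (hlam : (lam : ℂ) ∉ spectrum ℂ A)
    (u : lp (fun _ : Fin n → ℤ => ℂ) 2)
    (hu : ∀ g : Fin n → ℤ, (A u) g - (lam : ℂ) * u g = if g = 0 then 1 else 0) :
    {g : Fin n → ℤ | u g ≠ 0}.Infinite := by
  classical
  by_contra hinf
  rw [Set.not_infinite] at hinf
  letI : LinearOrder (Lex (Fin n → ℤ)) := Pi.Lex.linearOrder
  set b : (Fin n → ℤ) → ℂ := fun h => a h - if h = 0 then (lam : ℂ) else 0 with hbdef
  set V : Finset (Fin n → ℤ) := insert 0 ha.toFinset with hV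
  have hsuppb : ∀ h, b h ≠ 0 → h ∈ V := by
    intro h hh
    by_cases h0 : h = 0
    · simp [hV, h0]
    · simp only [hbdef, h0, if_neg, sub_zero, if_false] at hh
      simp only [hV, Finset.mem_insert, Set.Finite.mem_toFinset, Function.mem_support]
      exact Or.inr hh
  have key : ∀ g, ∑ h ∈ V, b h * u (g + h) = if g = 0 then 1 else 0 := by
    intro g
    have h1 := hu g
    rw [hA u g] at h1
    have h2 : ∑ᶠ h, a h * u (g + h) = ∑ h ∈ V, a h * u (g + h) := by
      apply finsum_eq_finset_sum_of_support_subset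
      intro h hh
      have hah : a h ≠ 0 := by
        intro e
        apply hh
        simp [Function.mem_support, e]
      simp only [hV, Finset.coe_insert, Set.mem_insert_iff, Set.Finite.coe_toFinset,
        Function.mem_support]
      exact Or.inr hah
    rw [h2] at h1
    calc ∑ h ∈ V, b h * u (g + h)
        = ∑ h ∈ V, (a h * u (g + h) - (if h = 0 then (lam : ℂ) else 0) * u (g + h)) := by
          apply Finset.sum_congr rfl
          intro h _
          simp only [hbdef]
          ring
      _ = (∑ h ∈ V, a h * u (g + h))
            - ∑ h ∈ V, (if h = 0 then (lam : ℂ) else 0) * u (g + h) := by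
          rw [Finset.sum_sub_distrib]
      _ = (∑ h ∈ V, a h * u (g + h)) - (lam : ℂ) * u g := by
          congr 1
          rw [Finset.sum_eq_single_of_mem 0 (Finset.mem_insert_self _ _)]
          · simp
          · intro h _ hne
            simp [hne]
      _ = if g = 0 then 1 else 0 := h1
  have hmemU : ∀ g : Fin n → ℤ, (u : (Fin n → ℤ) → ℂ) g ≠ 0 → g ∈ hinf.toFinset := by
    intro g hg
    rw [Set.Finite.mem_toFinset]
    exact hg
  have hUne : hinf.toFinset.Nonempty := by
    rcases Finset.eq_empty_or_nonempty hinf.toFinset with he | hne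
    · exfalso
      have hz : ∀ g : Fin n → ℤ, (u : (Fin n → ℤ) → ℂ) g = 0 := by
        intro g
        by_contra hg
        have := hmemU g hg
        rw [he] at this
        exact absurd this (Finset.notMem_empty g)
      have := key 0
      simp only [if_pos rfl] at this
      rw [Finset.sum_eq_zero (fun h _ => by rw [hz, mul_zero])] at this
      exact zero_ne_one this
    · exact hne
  obtain ⟨h0, hh0ne, hh0a⟩ := hnontriv
  have hbh0 : b h0 ≠ 0 := by simp [hbdef, hh0ne, hh0a]
  have hnh0ne : (-h0 : Fin n → ℤ) ≠ 0 := by simpa using hh0ne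
  have hbh0' : b (-h0) ≠ 0 := by
    simp only [hbdef, hnh0ne, if_neg, sub_zero, if_false, hsymm h0]
    exact star_ne_zero.mpr hh0a
  set B : Finset (Fin n → ℤ) := V.filter (fun h => b h ≠ 0) with hB
  have hmemB : ∀ h, b h ≠ 0 → h ∈ B := fun h hh =>
    Finset.mem_filter.mpr ⟨hsuppb h hh, hh⟩
  have hBmem : ∀ h ∈ B, b h ≠ 0 ∧ h ∈ V := fun h hh =>
    ⟨(Finset.mem_filter.mp hh).2, (Finset.mem_filter.mp hh).1⟩
  set U' : Finset (Lex (Fin n → ℤ)) := hinf.toFinset.image toLex with hU'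
  set B' : Finset (Lex (Fin n → ℤ)) := B.image toLex with hB'
  have hU'ne : U'.Nonempty := hUne.image _
  have hB'ne : B'.Nonempty := ⟨toLex h0, Finset.mem_image_of_mem _ (hmemB h0 hbh0)⟩
  have hU'mem : ∀ k ∈ U', (u : (Fin n → ℤ) → ℂ) (ofLex k) ≠ 0 := by
    intro k hk
    rcases Finset.mem_image.mp hk with ⟨x, hx, rfl⟩
    exact Set.Finite.mem_toFinset hinf |>.mp hx
  have hB'mem : ∀ m ∈ B', b (ofLex m) ≠ 0 ∧ ofLex m ∈ V := by
    intro m hm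
    rcases Finset.mem_image.mp hm with ⟨x, hx, rfl⟩
    exact hBmem x hx
  -- general single-term evaluation
  have main : ∀ (k m : Lex (Fin n → ℤ)), k ∈ U' → m ∈ B' →
      (∀ h : Fin n → ℤ, b h ≠ 0 → h ≠ ofLex m →
        (u : (Fin n → ℤ) → ℂ) (ofLex k - ofLex m + h) = 0) →
      ofLex k - ofLex m = 0 := by
    intro k m hk hm hzero
    by_contra hne
    have hkey := key (ofLex k - ofLex m)
    rw [if_neg hne] at hkey
    rw [Finset.sum_eq_single_of_mem (ofLex m) (hB'mem m hm).2] at hkey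
    · have heq : ofLex k - ofLex m + ofLex m = ofLex k := by abel
      rw [heq] at hkey
      exact mul_ne_zero (hB'mem m hm).1 (hU'mem k hk) hkey
    · intro h _ hne'
      by_cases hbz : b h = 0
      · rw [hbz, zero_mul]
      · rw [hzero h hbz hne', mul_zero]
  -- max side
  set kM := U'.max' hU'ne with hkM
  set hmn := B'.min' hB'ne with hhmn
  have e1 : ofLex kM - ofLex hmn = 0 := by
    apply main kM hmn (U'.max'_mem hU'ne) (B'.min'_mem hB'ne)
    intro h hbz hne'
    by_contra hnz
    have hmem : toLex (ofLex kM - ofLex hmn + h) ∈ U' :=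
      Finset.mem_image_of_mem _ (hmemU _ hnz)
    have hle : toLex (ofLex kM - ofLex hmn + h) ≤ kM := U'.le_max' _ hmem
    have hltm : hmn < toLex h := by
      refine lt_of_le_of_ne (B'.min'_le _ (Finset.mem_image_of_mem _ (hmemB h hbz))) ?_
      intro e
      exact hne' (by rw [e, ofLex_toLex])
    have hgt : kM < toLex (ofLex kM - ofLex hmn + h) := by
      have hrfl : toLex (ofLex kM - ofLex hmn + h) = kM - hmn + toLex h := rfl
      rw [hrfl]
      calc kM = kM - hmn + hmn := by abel
        _ < kM - hmn + toLex h := add_lt_add_right hltm _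
    exact absurd hle (not_le.mpr hgt)
  -- min side
  set km := U'.min' hU'ne with hkm
  set hmx := B'.max' hB'ne with hhmx
  have e2 : ofLex km - ofLex hmx = 0 := by
    apply main km hmx (U'.min'_mem hU'ne) (B'.max'_mem hB'ne)
    intro h hbz hne'
    by_contra hnz
    have hmem : toLex (ofLex km - ofLex hmx + h) ∈ U' :=
      Finset.mem_image_of_mem _ (hmemU _ hnz)
    have hle : km ≤ toLex (ofLex km - ofLex hmx + h) := U'.min'_le _ hmem
    have hltm : toLex h < hmx := by
      refine lt_of_le_of_ne (B'.le_max' _ (Finset.mem_image_of_mem _ (hmemB h hbz))) ?_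
      intro e
      exact hne' (by rw [← e, ofLex_toLex])
    have hgt2 : toLex (ofLex km - ofLex hmx + h) < km := by
      have hrfl : toLex (ofLex km - ofLex hmx + h) = km - hmx + toLex h := rfl
      rw [hrfl]
      calc km - hmx + toLex h < km - hmx + hmx := add_lt_add_right hltm _
        _ = km := by abel
    exact absurd hle (not_le.mpr hgt2)
  have ekM : kM = hmn := by
    have := sub_eq_zero.mp e1
    exact this
  have ekm : km = hmx := by
    have := sub_eq_zero.mp e2
    exact this
  have hordKm : km ≤ kM := Finset.min'_le _ _ (U'.max'_mem hU'ne)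
  have hBsq : hmx ≤ hmn := by rw [← ekM, ← ekm]; exact hordKm
  have h0B : toLex h0 ∈ B' := Finset.mem_image_of_mem _ (hmemB h0 hbh0)
  have h0B' : toLex (-h0) ∈ B' := Finset.mem_image_of_mem _ (hmemB (-h0) hbh0')
  have heq1 : toLex h0 = hmn :=
    le_antisymm (le_trans (B'.le_max' _ h0B) hBsq) (B'.min'_le _ h0B)
  have heq2 : toLex (-h0) = hmn :=
    le_antisymm (le_trans (B'.le_max' _ h0B') hBsq) (B'.min'_le _ h0B')
  have : h0 = -h0 := by
    have := heq1.trans heq2.symm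
    exact this
  apply hh0ne
  funext i
  have h2 := congrFun this i
  simp only [Pi.neg_apply] at h2
  simp only [Pi.zero_apply]
  omega
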